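/- For every affine signed permutation w in the group S̃^C_n, the cost of w is at least half of its total displacement: $(w) ≥ tvd(w)/2. -/

import Mathlib

/-- An affine signed permutation in `S̃^C_n`: a bijection `w : ℤ → ℤ` with
`w(−i) = −w(i)` and `w(i + (2n+2)) = w(i) + (2n+2)` for all `i ∈ ℤ`. -/
def IsAffCPerm (n : ℕ) (w : Equiv.Perm ℤ) : Prop :=
  (∀ i : ℤ, w (-i) = - w i) ∧
  (∀ i : ℤ, w (i + (2 * (n : ℤ) + 2)) = w i + (2 * (n : ℤ) + 2))

/-- Total displacement: `tvd(w) = ∑_{i=1}^n |w(i) − i|`. -/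
noncomputable def tvdAffC (n : ℕ) (w : Equiv.Perm ℤ) : ℕ :=
  ∑ i ∈ Finset.Icc (1 : ℤ) (n : ℤ), (w i - i).natAbs

/-- `t` is a transposition `⟨(x y)⟩` of `S̃^C_n` of cost `c`.  Writing `N = 2n+2`:
either (first kind) `x < y` with `x ≢ ±y (mod N)`, `t` exchanges `x + kN ↔ y + kN` and
`−x + kN ↔ −y + kN` for all `k ∈ ℤ` and fixes all other integers, and `c = y − x`;
or (second kind) `x < y` with `x + y ≡ 0 (mod N)`, `x ≢ y (mod N)`, and `x` not a
multiple of `n+1`, `t` exchanges `x + kN ↔ y + kN` for all `k ∈ ℤ` and fixes all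
other integers, and `c = (y − x)/2`. -/
def IsAffCTransp (n : ℕ) (t : Equiv.Perm ℤ) (c : ℕ) : Prop :=
  (∃ x y : ℤ, x < y ∧
    ¬ ((2 * (n : ℤ) + 2) ∣ (y - x)) ∧ ¬ ((2 * (n : ℤ) + 2) ∣ (y + x)) ∧
    (∀ k : ℤ, t (x + k * (2 * (n : ℤ) + 2)) = y + k * (2 * (n : ℤ) + 2)) ∧
    (∀ k : ℤ, t (y + k * (2 * (n : ℤ) + 2)) = x + k * (2 * (n : ℤ) + 2)) ∧
    (∀ k : ℤ, t (-x + k * (2 * (n : ℤ) + 2)) = -y + k * (2 * (n : ℤ) + 2)) ∧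
    (∀ k : ℤ, t (-y + k * (2 * (n : ℤ) + 2)) = -x + k * (2 * (n : ℤ) + 2)) ∧
    (∀ z : ℤ, (∀ k : ℤ, z ≠ x + k * (2 * (n : ℤ) + 2) ∧ z ≠ y + k * (2 * (n : ℤ) + 2) ∧
        z ≠ -x + k * (2 * (n : ℤ) + 2) ∧ z ≠ -y + k * (2 * (n : ℤ) + 2)) → t z = z) ∧
    (c : ℤ) = y - x) ∨
  (∃ x y : ℤ, x < y ∧
    ((2 * (n : ℤ) + 2) ∣ (x + y)) ∧ ¬ ((2 * (n : ℤ) + 2) ∣ (y - x)) ∧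
    ¬ (((n : ℤ) + 1) ∣ x) ∧
    (∀ k : ℤ, t (x + k * (2 * (n : ℤ) + 2)) = y + k * (2 * (n : ℤ) + 2)) ∧
    (∀ k : ℤ, t (y + k * (2 * (n : ℤ) + 2)) = x + k * (2 * (n : ℤ) + 2)) ∧
    (∀ z : ℤ, (∀ k : ℤ, z ≠ x + k * (2 * (n : ℤ) + 2) ∧ z ≠ y + k * (2 * (n : ℤ) + 2)) →
        t z = z) ∧
    2 * (c : ℤ) = y - x)

/-- The cost of `w ∈ S̃^C_n`: the minimum of `$(t₁) + ⋯ + $(t_k)` over all factorizations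
`w = t₁ ⋯ t_k` into transpositions of `S̃^C_n`. -/
noncomputable def costAffC (n : ℕ) (w : Equiv.Perm ℤ) : ℕ :=
  sInf {c : ℕ | ∃ L : List (Equiv.Perm ℤ × ℕ),
    (∀ p ∈ L, IsAffCTransp n p.1 p.2) ∧
    (L.map Prod.fst).prod = w ∧ c = (L.map Prod.snd).sum}




namespace AffC

lemma bounded_eq_zero {N a : ℤ} (hN : 0 < N) (h : N ∣ a) (h1 : -N < a) (h2 : a < N) :
    a = 0 := by
  obtain ⟨m, rfl⟩ := h
  rcases lt_trichotomy m 0 with hm | hm | hm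
  · nlinarith
  · simp [hm]
  · nlinarith

variable {n : ℕ} {w : Equiv.Perm ℤ}

lemma perm_zero (hw : IsAffCPerm n w) : w 0 = 0 := by
  have h := hw.1 0
  simp at h
  linarith

lemma perm_period (hw : IsAffCPerm n w) (z m : ℤ) :
    w (z + m * (2 * (n : ℤ) + 2)) = w z + m * (2 * (n : ℤ) + 2) := by
  induction m using Int.induction_on with
  | zero => simp
  | succ m ih =>
      have := hw.2 (z + m * (2 * (n : ℤ) + 2))
      rw [ih] at this
      have e : z + (m + 1 : ℤ) * (2 * (n : ℤ) + 2)
          = z + m * (2 * (n : ℤ) + 2) + (2 * (n : ℤ) + 2) := by ring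
      rw [e, this]; ring
  | pred m ih =>
      have := hw.2 (z + (-m - 1) * (2 * (n : ℤ) + 2))
      have e : z + (-m - 1 : ℤ) * (2 * (n : ℤ) + 2) + (2 * (n : ℤ) + 2)
          = z + (-m : ℤ) * (2 * (n : ℤ) + 2) := by ring
      rw [e, ih] at this
      have : w (z + (-m - 1 : ℤ) * (2 * (n : ℤ) + 2))
          = w z + (-m : ℤ) * (2 * (n : ℤ) + 2) - (2 * (n : ℤ) + 2) := by linarith
      rw [this]; ring

lemma perm_apply (hw : IsAffCPerm n w) {e : ℤ} (he : e = 1 ∨ e = -1) (j m : ℤ) :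
    w (e * j + m * (2 * (n : ℤ) + 2)) = e * w j + m * (2 * (n : ℤ) + 2) := by
  rcases he with rfl | rfl
  · simpa using perm_period hw j m
  · have := perm_period hw (-j) m
    rw [hw.1 j] at this
    simpa using this

lemma perm_np1 (hw : IsAffCPerm n w) : w ((n : ℤ) + 1) = (n : ℤ) + 1 := by
  have h1 := hw.1 ((n : ℤ) + 1)
  have h2 := perm_period hw ((n : ℤ) + 1) (-1)
  have e : (n : ℤ) + 1 + (-1) * (2 * (n : ℤ) + 2) = -((n : ℤ) + 1) := by ring
  rw [e] at h2
  rw [h1] at h2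
  linarith

lemma perm_inj_class (hw : IsAffCPerm n w) {e : ℤ} (he : e = 1 ∨ e = -1) {i j m : ℤ}
    (h : w i = e * w j + m * (2 * (n : ℤ) + 2)) : i = e * j + m * (2 * (n : ℤ) + 2) := by
  have := perm_apply hw he j m
  exact w.injective (by rw [h, this])

lemma decomp (n : ℕ) (z : ℤ) : ∃ e j m : ℤ, (e = 1 ∨ e = -1) ∧ 0 ≤ j ∧ j ≤ (n : ℤ) + 1 ∧
    z = e * j + m * (2 * (n : ℤ) + 2) := by
  set N : ℤ := 2 * (n : ℤ) + 2 with hNdef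
  have hN : 0 < N := by positivity
  have h0 : 0 ≤ z % N := Int.emod_nonneg z (by omega)
  have h1 : z % N < N := Int.emod_lt_of_pos z hN
  have h2 : N * (z / N) + z % N = z := Int.mul_ediv_add_emod z N
  by_cases hc : z % N ≤ (n : ℤ) + 1
  · exact ⟨1, z % N, z / N, Or.inl rfl, h0, hc, by linarith [h2]⟩
  · refine ⟨-1, N - z % N, z / N + 1, Or.inr rfl, by omega, by omega, by linarith [h2]⟩


variable {n : ℕ} {t : Equiv.Perm ℤ} {c : ℕ}

lemma dvd_of_eq_form {N z a k : ℤ} (h : z = a + k * N) : N ∣ z - a :=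
  ⟨k, by linear_combination h⟩

lemma transp_isPerm (ht : IsAffCTransp n t c) : IsAffCPerm n t := by
  rcases ht with ⟨x, y, hxy, hd, hs, hxk, hyk, hmx, hmy, hfix, hc⟩ |
    ⟨x, y, hxy, hsum, hd, hx1, hxk, hyk, hfix, hc⟩
  · constructor
    · intro z
      by_cases h1 : (2 * (n : ℤ) + 2) ∣ z - x
      · obtain ⟨k, hk⟩ := h1
        have e1 : t z = y + k * (2 * (n : ℤ) + 2) := by
          have hz : z = x + k * (2 * (n : ℤ) + 2) := by linear_combination hk
          rw [hz]; exact hxk k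
        have e2 : t (-z) = -y + (-k) * (2 * (n : ℤ) + 2) := by
          have hz : -z = -x + (-k) * (2 * (n : ℤ) + 2) := by linear_combination -hk
          rw [hz]; exact hmx (-k)
        rw [e1, e2]; ring
      · by_cases h2 : (2 * (n : ℤ) + 2) ∣ z - y
        · obtain ⟨k, hk⟩ := h2
          have e1 : t z = x + k * (2 * (n : ℤ) + 2) := by
            have hz : z = y + k * (2 * (n : ℤ) + 2) := by linear_combination hk
            rw [hz]; exact hyk k
          have e2 : t (-z) = -x + (-k) * (2 * (n : ℤ) + 2) := by
            have hz : -z = -y + (-k) * (2 * (n : ℤ) + 2) := by linear_combination -hk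
            rw [hz]; exact hmy (-k)
          rw [e1, e2]; ring
        · by_cases h3 : (2 * (n : ℤ) + 2) ∣ z + x
          · obtain ⟨k, hk⟩ := h3
            have e1 : t z = -y + k * (2 * (n : ℤ) + 2) := by
              have hz : z = -x + k * (2 * (n : ℤ) + 2) := by linear_combination hk
              rw [hz]; exact hmx k
            have e2 : t (-z) = y + (-k) * (2 * (n : ℤ) + 2) := by
              have hz : -z = x + (-k) * (2 * (n : ℤ) + 2) := by linear_combination -hk
              rw [hz]; exact hxk (-k)
            rw [e1, e2]; ring
          · by_cases h4 : (2 * (n : ℤ) + 2) ∣ z + y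
            · obtain ⟨k, hk⟩ := h4
              have e1 : t z = -x + k * (2 * (n : ℤ) + 2) := by
                have hz : z = -y + k * (2 * (n : ℤ) + 2) := by linear_combination hk
                rw [hz]; exact hmy k
              have e2 : t (-z) = x + (-k) * (2 * (n : ℤ) + 2) := by
                have hz : -z = y + (-k) * (2 * (n : ℤ) + 2) := by linear_combination -hk
                rw [hz]; exact hyk (-k)
              rw [e1, e2]; ring
            · have e1 : t z = z := by
                refine hfix z fun k => ⟨fun h => h1 ⟨k, by linear_combination h⟩,
                  fun h => h2 ⟨k, by linear_combination h⟩,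
                  fun h => h3 ⟨k, by linear_combination h⟩,
                  fun h => h4 ⟨k, by linear_combination h⟩⟩
              have e2 : t (-z) = -z := by
                refine hfix (-z) fun k => ⟨fun h => h3 ⟨-k, by linear_combination -h⟩,
                  fun h => h4 ⟨-k, by linear_combination -h⟩,
                  fun h => h1 ⟨-k, by linear_combination -h⟩,
                  fun h => h2 ⟨-k, by linear_combination -h⟩⟩
              rw [e1, e2]
    · intro z
      by_cases h1 : (2 * (n : ℤ) + 2) ∣ z - x
      · obtain ⟨k, hk⟩ := h1
        have e1 : t z = y + k * (2 * (n : ℤ) + 2) := by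
          have hz : z = x + k * (2 * (n : ℤ) + 2) := by linear_combination hk
          rw [hz]; exact hxk k
        have e2 : t (z + (2 * (n : ℤ) + 2)) = y + (k + 1) * (2 * (n : ℤ) + 2) := by
          have hz : z + (2 * (n : ℤ) + 2) = x + (k + 1) * (2 * (n : ℤ) + 2) := by
            linear_combination hk
          rw [hz]; exact hxk (k + 1)
        rw [e1, e2]; ring
      · by_cases h2 : (2 * (n : ℤ) + 2) ∣ z - y
        · obtain ⟨k, hk⟩ := h2
          have e1 : t z = x + k * (2 * (n : ℤ) + 2) := by
            have hz : z = y + k * (2 * (n : ℤ) + 2) := by linear_combination hk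
            rw [hz]; exact hyk k
          have e2 : t (z + (2 * (n : ℤ) + 2)) = x + (k + 1) * (2 * (n : ℤ) + 2) := by
            have hz : z + (2 * (n : ℤ) + 2) = y + (k + 1) * (2 * (n : ℤ) + 2) := by
              linear_combination hk
            rw [hz]; exact hyk (k + 1)
          rw [e1, e2]; ring
        · by_cases h3 : (2 * (n : ℤ) + 2) ∣ z + x
          · obtain ⟨k, hk⟩ := h3
            have e1 : t z = -y + k * (2 * (n : ℤ) + 2) := by
              have hz : z = -x + k * (2 * (n : ℤ) + 2) := by linear_combination hk
              rw [hz]; exact hmx k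
            have e2 : t (z + (2 * (n : ℤ) + 2)) = -y + (k + 1) * (2 * (n : ℤ) + 2) := by
              have hz : z + (2 * (n : ℤ) + 2) = -x + (k + 1) * (2 * (n : ℤ) + 2) := by
                linear_combination hk
              rw [hz]; exact hmx (k + 1)
            rw [e1, e2]; ring
          · by_cases h4 : (2 * (n : ℤ) + 2) ∣ z + y
            · obtain ⟨k, hk⟩ := h4
              have e1 : t z = -x + k * (2 * (n : ℤ) + 2) := by
                have hz : z = -y + k * (2 * (n : ℤ) + 2) := by linear_combination hk
                rw [hz]; exact hmy k
              have e2 : t (z + (2 * (n : ℤ) + 2)) = -x + (k + 1) * (2 * (n : ℤ) + 2) := by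
                have hz : z + (2 * (n : ℤ) + 2) = -y + (k + 1) * (2 * (n : ℤ) + 2) := by
                  linear_combination hk
                rw [hz]; exact hmy (k + 1)
              rw [e1, e2]; ring
            · have e1 : t z = z := by
                refine hfix z fun k => ⟨fun h => h1 ⟨k, by linear_combination h⟩,
                  fun h => h2 ⟨k, by linear_combination h⟩,
                  fun h => h3 ⟨k, by linear_combination h⟩,
                  fun h => h4 ⟨k, by linear_combination h⟩⟩
              have e2 : t (z + (2 * (n : ℤ) + 2)) = z + (2 * (n : ℤ) + 2) := by
                refine hfix (z + (2 * (n : ℤ) + 2)) fun k =>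
                  ⟨fun h => h1 ⟨k - 1, by linear_combination h⟩,
                  fun h => h2 ⟨k - 1, by linear_combination h⟩,
                  fun h => h3 ⟨k - 1, by linear_combination h⟩,
                  fun h => h4 ⟨k - 1, by linear_combination h⟩⟩
              rw [e1, e2]
  · obtain ⟨s, hsum'⟩ := hsum
    constructor
    · intro z
      by_cases h1 : (2 * (n : ℤ) + 2) ∣ z - x
      · obtain ⟨k, hk⟩ := h1
        have e1 : t z = y + k * (2 * (n : ℤ) + 2) := by
          have hz : z = x + k * (2 * (n : ℤ) + 2) := by linear_combination hk
          rw [hz]; exact hxk k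
        have e2 : t (-z) = x + (-s - k) * (2 * (n : ℤ) + 2) := by
          have hz : -z = y + (-s - k) * (2 * (n : ℤ) + 2) := by
            linear_combination -hk - hsum'
          rw [hz]; exact hyk (-s - k)
        rw [e1, e2]; linear_combination hsum'
      · by_cases h2 : (2 * (n : ℤ) + 2) ∣ z - y
        · obtain ⟨k, hk⟩ := h2
          have e1 : t z = x + k * (2 * (n : ℤ) + 2) := by
            have hz : z = y + k * (2 * (n : ℤ) + 2) := by linear_combination hk
            rw [hz]; exact hyk k
          have e2 : t (-z) = y + (-s - k) * (2 * (n : ℤ) + 2) := by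
            have hz : -z = x + (-s - k) * (2 * (n : ℤ) + 2) := by
              linear_combination -hk - hsum'
            rw [hz]; exact hxk (-s - k)
          rw [e1, e2]; linear_combination hsum'
        · have e1 : t z = z := by
            refine hfix z fun k => ⟨fun h => h1 ⟨k, by linear_combination h⟩,
              fun h => h2 ⟨k, by linear_combination h⟩⟩
          have e2 : t (-z) = -z := by
            refine hfix (-z) fun k => ⟨fun h => h2 ⟨-s - k, by linear_combination -h - hsum'⟩,
              fun h => h1 ⟨-s - k, by linear_combination -h - hsum'⟩⟩
          rw [e1, e2]
    · intro z
      by_cases h1 : (2 * (n : ℤ) + 2) ∣ z - x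
      · obtain ⟨k, hk⟩ := h1
        have e1 : t z = y + k * (2 * (n : ℤ) + 2) := by
          have hz : z = x + k * (2 * (n : ℤ) + 2) := by linear_combination hk
          rw [hz]; exact hxk k
        have e2 : t (z + (2 * (n : ℤ) + 2)) = y + (k + 1) * (2 * (n : ℤ) + 2) := by
          have hz : z + (2 * (n : ℤ) + 2) = x + (k + 1) * (2 * (n : ℤ) + 2) := by
            linear_combination hk
          rw [hz]; exact hxk (k + 1)
        rw [e1, e2]; ring
      · by_cases h2 : (2 * (n : ℤ) + 2) ∣ z - y
        · obtain ⟨k, hk⟩ := h2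
          have e1 : t z = x + k * (2 * (n : ℤ) + 2) := by
            have hz : z = y + k * (2 * (n : ℤ) + 2) := by linear_combination hk
            rw [hz]; exact hyk k
          have e2 : t (z + (2 * (n : ℤ) + 2)) = x + (k + 1) * (2 * (n : ℤ) + 2) := by
            have hz : z + (2 * (n : ℤ) + 2) = y + (k + 1) * (2 * (n : ℤ) + 2) := by
              linear_combination hk
            rw [hz]; exact hyk (k + 1)
          rw [e1, e2]; ring
        · have e1 : t z = z := by
            refine hfix z fun k => ⟨fun h => h1 ⟨k, by linear_combination h⟩,
              fun h => h2 ⟨k, by linear_combination h⟩⟩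
          have e2 : t (z + (2 * (n : ℤ) + 2)) = z + (2 * (n : ℤ) + 2) := by
            refine hfix (z + (2 * (n : ℤ) + 2)) fun k =>
              ⟨fun h => h1 ⟨k - 1, by linear_combination h⟩,
              fun h => h2 ⟨k - 1, by linear_combination h⟩⟩
          rw [e1, e2]

lemma one_isPerm : IsAffCPerm n 1 := ⟨by intro i; simp, by intro i; simp⟩

lemma mul_isPerm {u v : Equiv.Perm ℤ} (hu : IsAffCPerm n u) (hv : IsAffCPerm n v) :
    IsAffCPerm n (u * v) := by
  constructor
  · intro i
    simp only [Equiv.Perm.mul_apply, hv.1 i, hu.1 (v i)]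
  · intro i
    simp only [Equiv.Perm.mul_apply, hv.2 i, hu.2 (v i)]


lemma pair_contra {v : Equiv.Perm ℤ} (hv : IsAffCPerm n v) {i j a : ℤ}
    (hi1 : 1 ≤ i) (hi2 : i ≤ (n : ℤ)) (hj1 : 1 ≤ j) (hj2 : j ≤ (n : ℤ)) (hij : i ≠ j)
    (ha : (2 * (n : ℤ) + 2) ∣ v i - a ∨ (2 * (n : ℤ) + 2) ∣ v i + a)
    (hb : (2 * (n : ℤ) + 2) ∣ v j - a ∨ (2 * (n : ℤ) + 2) ∣ v j + a) : False := by
  have hN : (0 : ℤ) < 2 * (n : ℤ) + 2 := by positivity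
  rcases ha with ⟨k1, hk1⟩ | ⟨k1, hk1⟩ <;> rcases hb with ⟨k2, hk2⟩ | ⟨k2, hk2⟩
  · have h := perm_inj_class hv (Or.inl rfl) (i := i) (j := j) (m := k1 - k2)
      (by linear_combination hk1 - hk2)
    have h0 : i - j = 0 := bounded_eq_zero hN ⟨k1 - k2, by linear_combination h⟩
      (by omega) (by omega)
    omega
  · have h := perm_inj_class hv (Or.inr rfl) (i := i) (j := j) (m := k1 + k2)
      (by linear_combination hk1 + hk2)
    have h0 : i + j = 0 := bounded_eq_zero hN ⟨k1 + k2, by linear_combination h⟩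
      (by omega) (by omega)
    omega
  · have h := perm_inj_class hv (Or.inr rfl) (i := i) (j := j) (m := k1 + k2)
      (by linear_combination hk1 + hk2)
    have h0 : i + j = 0 := bounded_eq_zero hN ⟨k1 + k2, by linear_combination h⟩
      (by omega) (by omega)
    omega
  · have h := perm_inj_class hv (Or.inl rfl) (i := i) (j := j) (m := k1 - k2)
      (by linear_combination hk1 - hk2)
    have h0 : i - j = 0 := bounded_eq_zero hN ⟨k1 - k2, by linear_combination h⟩
      (by omega) (by omega)
    omega

lemma key_sum {v : Equiv.Perm ℤ} (hv : IsAffCPerm n v) (ht : IsAffCTransp n t c) :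
    ∑ i ∈ Finset.Icc (1 : ℤ) (n : ℤ), (t (v i) - v i).natAbs ≤ 2 * c := by
  classical
  set S := (Finset.Icc (1 : ℤ) (n : ℤ)).filter (fun i => t (v i) ≠ v i) with hS
  have hsum_eq : ∑ i ∈ Finset.Icc (1 : ℤ) (n : ℤ), (t (v i) - v i).natAbs
      = ∑ i ∈ S, (t (v i) - v i).natAbs := by
    refine (Finset.sum_subset (Finset.filter_subset _ _) ?_).symm
    intro i hmem hiS
    have he : t (v i) = v i := by
      by_contra h
      exact hiS (Finset.mem_filter.mpr ⟨hmem, h⟩)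
    rw [he]; simp
  rw [hsum_eq]
  rcases ht with ⟨x, y, hxy, hd, hs, hxk, hyk, hmx, hmy, hfix, hc⟩ |
    ⟨x, y, hxy, hsum, hd, hx1, hxk, hyk, hfix, hc⟩
  · -- first kind
    have hmoved : ∀ i ∈ S, ((2 * (n : ℤ) + 2) ∣ v i - x ∨ (2 * (n : ℤ) + 2) ∣ v i + x) ∨
        ((2 * (n : ℤ) + 2) ∣ v i - y ∨ (2 * (n : ℤ) + 2) ∣ v i + y) := by
      intro i hiS
      rw [Finset.mem_filter] at hiS
      by_contra hcon
      push_neg at hcon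
      exact hiS.2 (hfix (v i) fun k =>
        ⟨fun h => hcon.1.1 ⟨k, by linear_combination h⟩,
         fun h => hcon.2.1 ⟨k, by linear_combination h⟩,
         fun h => hcon.1.2 ⟨k, by linear_combination h⟩,
         fun h => hcon.2.2 ⟨k, by linear_combination h⟩⟩)
    have hval : ∀ i ∈ S, (t (v i) - v i).natAbs = c := by
      intro i hiS
      rcases hmoved i hiS with (⟨k, hk⟩ | ⟨k, hk⟩) | (⟨k, hk⟩ | ⟨k, hk⟩)
      · have e : t (v i) = y + k * (2 * (n : ℤ) + 2) := by
          have hz : v i = x + k * (2 * (n : ℤ) + 2) := by linear_combination hk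
          rw [hz]; exact hxk k
        have : t (v i) - v i = y - x := by linear_combination e - hk
        omega
      · have e : t (v i) = -y + k * (2 * (n : ℤ) + 2) := by
          have hz : v i = -x + k * (2 * (n : ℤ) + 2) := by linear_combination hk
          rw [hz]; exact hmx k
        have : t (v i) - v i = -(y - x) := by linear_combination e - hk
        omega
      · have e : t (v i) = x + k * (2 * (n : ℤ) + 2) := by
          have hz : v i = y + k * (2 * (n : ℤ) + 2) := by linear_combination hk
          rw [hz]; exact hyk k
        have : t (v i) - v i = -(y - x) := by linear_combination e - hk
        omega
      · have e : t (v i) = -x + k * (2 * (n : ℤ) + 2) := by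
          have hz : v i = -y + k * (2 * (n : ℤ) + 2) := by linear_combination hk
          rw [hz]; exact hmy k
        have : t (v i) - v i = y - x := by linear_combination e - hk
        omega
    have hbounds : ∀ i ∈ S, 1 ≤ i ∧ i ≤ (n : ℤ) := by
      intro i hiS
      rw [Finset.mem_filter, Finset.mem_Icc] at hiS
      exact hiS.1
    have hcard : S.card ≤ 2 := by
      by_contra hcon
      push_neg at hcon
      rw [Finset.two_lt_card] at hcon
      obtain ⟨a, haS, b, hbS, d, hdS, hab, had, hbd⟩ := hcon
      -- each element's class pair is x or y; pigeonhole
      have hxy_excl : ∀ i ∈ S, ∀ j ∈ S,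
          ((2 * (n : ℤ) + 2) ∣ v i - x ∨ (2 * (n : ℤ) + 2) ∣ v i + x) →
          ((2 * (n : ℤ) + 2) ∣ v j - y ∨ (2 * (n : ℤ) + 2) ∣ v j + y) → True := fun _ _ _ _ _ _ => trivial
      rcases hmoved a haS with hA | hA <;> rcases hmoved b hbS with hB | hB <;>
        rcases hmoved d hdS with hD | hD
      · exact pair_contra hv (hbounds a haS).1 (hbounds a haS).2 (hbounds b hbS).1
          (hbounds b hbS).2 hab hA hB
      · exact pair_contra hv (hbounds a haS).1 (hbounds a haS).2 (hbounds b hbS).1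
          (hbounds b hbS).2 hab hA hB
      · exact pair_contra hv (hbounds a haS).1 (hbounds a haS).2 (hbounds d hdS).1
          (hbounds d hdS).2 had hA hD
      · exact pair_contra hv (hbounds b hbS).1 (hbounds b hbS).2 (hbounds d hdS).1
          (hbounds d hdS).2 hbd hB hD
      · exact pair_contra hv (hbounds b hbS).1 (hbounds b hbS).2 (hbounds d hdS).1
          (hbounds d hdS).2 hbd hB hD
      · exact pair_contra hv (hbounds a haS).1 (hbounds a haS).2 (hbounds d hdS).1
          (hbounds d hdS).2 had hA hD
      · exact pair_contra hv (hbounds a haS).1 (hbounds a haS).2 (hbounds b hbS).1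
          (hbounds b hbS).2 hab hA hB
      · exact pair_contra hv (hbounds a haS).1 (hbounds a haS).2 (hbounds b hbS).1
          (hbounds b hbS).2 hab hA hB
    calc ∑ i ∈ S, (t (v i) - v i).natAbs = ∑ i ∈ S, c := Finset.sum_congr rfl hval
      _ = S.card * c := by rw [Finset.sum_const, smul_eq_mul]
      _ ≤ 2 * c := Nat.mul_le_mul_right c hcard
  · -- second kind
    obtain ⟨s0, hs0⟩ := hsum
    have hmoved : ∀ i ∈ S, (2 * (n : ℤ) + 2) ∣ v i - x ∨ (2 * (n : ℤ) + 2) ∣ v i + x := by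
      intro i hiS
      rw [Finset.mem_filter] at hiS
      by_contra hcon
      push_neg at hcon
      refine hiS.2 (hfix (v i) fun k => ⟨fun h => hcon.1 ⟨k, by linear_combination h⟩,
        fun h => hcon.2 ⟨k + s0, by linear_combination h + hs0⟩⟩)
    have hval : ∀ i ∈ S, (t (v i) - v i).natAbs = 2 * c := by
      intro i hiS
      rcases hmoved i hiS with ⟨k, hk⟩ | ⟨k, hk⟩
      · have e : t (v i) = y + k * (2 * (n : ℤ) + 2) := by
          have hz : v i = x + k * (2 * (n : ℤ) + 2) := by linear_combination hk
          rw [hz]; exact hxk k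
        have : t (v i) - v i = y - x := by linear_combination e - hk
        omega
      · have e : t (v i) = x + (k - s0) * (2 * (n : ℤ) + 2) := by
          have hz : v i = y + (k - s0) * (2 * (n : ℤ) + 2) := by
            linear_combination hk - hs0
          rw [hz]; exact hyk (k - s0)
        have : t (v i) - v i = -(y - x) := by linear_combination e - hk + hs0
        omega
    have hbounds : ∀ i ∈ S, 1 ≤ i ∧ i ≤ (n : ℤ) := by
      intro i hiS
      rw [Finset.mem_filter, Finset.mem_Icc] at hiS
      exact hiS.1
    have hcard : S.card ≤ 1 := by
      rw [Finset.card_le_one]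
      intro a haS b hbS
      by_contra hab
      exact pair_contra hv (hbounds a haS).1 (hbounds a haS).2 (hbounds b hbS).1
        (hbounds b hbS).2 hab (hmoved a haS) (hmoved b hbS)
    calc ∑ i ∈ S, (t (v i) - v i).natAbs = ∑ i ∈ S, 2 * c := Finset.sum_congr rfl hval
      _ = S.card * (2 * c) := by rw [Finset.sum_const, smul_eq_mul]
      _ ≤ 1 * (2 * c) := Nat.mul_le_mul_right _ hcard
      _ = 2 * c := one_mul _



def sw (N x y : ℤ) : ℤ → ℤ := fun z =>
  if N ∣ z - x then z + (y - x) else if N ∣ z - y then z - (y - x) else z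

lemma not_dvd_aux {N A B C : ℤ} (hB : N ∣ B) (hC : ¬ N ∣ C) (e : A = B + C) :
    ¬ N ∣ A := fun h => hC (by
  have := dvd_sub h hB
  rwa [e, add_sub_cancel_left] at this)

lemma dvd_aux {N A B : ℤ} (hB : N ∣ B) (e : A = B) : N ∣ A := by rw [e]; exact hB

lemma sw_invol {N x y : ℤ} (h : ¬ N ∣ y - x) : Function.Involutive (sw N x y) := by
  intro z
  unfold sw
  by_cases h1 : N ∣ z - x
  · have c1 : ¬ N ∣ z + (y - x) - x := not_dvd_aux h1 h (by ring)
    have c2 : N ∣ z + (y - x) - y := dvd_aux h1 (by ring)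
    simp [h1, c1, c2]
  · by_cases h2 : N ∣ z - y
    · have c1 : N ∣ z - (y - x) - x := dvd_aux h2 (by ring)
      simp [h1, h2, c1]; try ring
    · simp [h1, h2]

def sw2 (N x y : ℤ) : ℤ → ℤ := fun z =>
  if N ∣ z - x then z + (y - x)
  else if N ∣ z - y then z - (y - x)
  else if N ∣ z + x then z - (y - x)
  else if N ∣ z + y then z + (y - x)
  else z

lemma sw2_invol {N x y : ℤ} (hd : ¬ N ∣ y - x) (hs : ¬ N ∣ y + x)
    (h2x : ¬ N ∣ 2 * x) (h2y : ¬ N ∣ 2 * y) : Function.Involutive (sw2 N x y) := by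
  have hd' : ¬ N ∣ x - y := fun h => hd (by have := dvd_neg.mpr h; simpa [neg_sub] using this)
  have hs' : ¬ N ∣ -(y + x) := fun h => hs (dvd_neg.mp h)
  have h2x' : ¬ N ∣ -(2 * x) := fun h => h2x (dvd_neg.mp h)
  have h2y' : ¬ N ∣ -(2 * y) := fun h => h2y (dvd_neg.mp h)
  intro z
  unfold sw2
  by_cases h1 : N ∣ z - x
  · have c1 : ¬ N ∣ z + (y - x) - x := not_dvd_aux h1 hd (by ring)
    have c2 : N ∣ z + (y - x) - y := dvd_aux h1 (by ring)
    simp [h1, c1, c2]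
  · by_cases h2 : N ∣ z - y
    · have c1 : N ∣ z - (y - x) - x := dvd_aux h2 (by ring)
      simp [h1, h2, c1]; try ring
    · by_cases h3 : N ∣ z + x
      · have c1 : ¬ N ∣ z - (y - x) - x := not_dvd_aux h3 hs' (by ring)
        have c2 : ¬ N ∣ z - (y - x) - y := not_dvd_aux h3 h2y' (by ring)
        have c3 : ¬ N ∣ z - (y - x) + x := not_dvd_aux h3 hd' (by ring)
        have c4 : N ∣ z - (y - x) + y := dvd_aux h3 (by ring)
        simp [h1, h2, h3, c1, c2, c3, c4]; try ring
      · by_cases h4 : N ∣ z + y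
        · have c1 : ¬ N ∣ z + (y - x) - x := not_dvd_aux h4 h2x' (by ring)
          have c2 : ¬ N ∣ z + (y - x) - y := not_dvd_aux h4 hs' (by ring)
          have c3 : N ∣ z + (y - x) + x := dvd_aux h4 (by ring)
          simp [h1, h2, h3, h4, c1, c2, c3]
        · simp [h1, h2, h3, h4]

/-! ### second-kind transposition -/

def t2 {N x y : ℤ} (hd : ¬ N ∣ y - x) : Equiv.Perm ℤ :=
  Function.Involutive.toPerm _ (sw_invol hd)

lemma t2_apply {N x y : ℤ} (hd : ¬ N ∣ y - x) (z : ℤ) : t2 hd z = sw N x y z := rfl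

lemma t2_sq {N x y : ℤ} (hd : ¬ N ∣ y - x) : t2 hd * t2 hd = 1 := by
  ext z
  simp only [Equiv.Perm.mul_apply, t2_apply, Equiv.Perm.one_apply]
  exact sw_invol hd z

lemma t2_left {N x y : ℤ} (hd : ¬ N ∣ y - x) (k : ℤ) :
    t2 hd (x + k * N) = y + k * N := by
  have h1 : N ∣ x + k * N - x := dvd_aux (Dvd.intro k rfl) (by ring)
  rw [t2_apply]
  unfold sw
  rw [if_pos h1]; ring

lemma t2_right {N x y : ℤ} (hd : ¬ N ∣ y - x) (k : ℤ) :
    t2 hd (y + k * N) = x + k * N := by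
  have hkN : N ∣ k * N := ⟨k, mul_comm k N⟩
  have h1 : ¬ N ∣ y + k * N - x := not_dvd_aux hkN hd (by ring)
  have h2 : N ∣ y + k * N - y := dvd_aux hkN (by ring)
  rw [t2_apply]
  unfold sw
  rw [if_neg h1, if_pos h2]; ring

lemma t2_fix {N x y : ℤ} (hd : ¬ N ∣ y - x) (z : ℤ)
    (h1 : ¬ N ∣ z - x) (h2 : ¬ N ∣ z - y) : t2 hd z = z := by
  rw [t2_apply]; unfold sw; rw [if_neg h1, if_neg h2]

lemma is_transp2 {n : ℕ} {x y : ℤ} (hxy : x < y)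
    (hs : (2 * (n : ℤ) + 2) ∣ (x + y)) (hd : ¬ (2 * (n : ℤ) + 2) ∣ (y - x))
    (hx : ¬ ((n : ℤ) + 1) ∣ x) :
    IsAffCTransp n (t2 hd) (((y - x) / 2).toNat) := by
  right
  refine ⟨x, y, hxy, hs, hd, hx, t2_left hd, t2_right hd, ?_, ?_⟩
  · intro z hz
    refine t2_fix hd z (fun h => ?_) (fun h => ?_)
    · obtain ⟨k, hk⟩ := h
      exact (hz k).1 (by linarith)
    · obtain ⟨k, hk⟩ := h
      exact (hz k).2 (by linarith)
  · obtain ⟨m, hm⟩ := hs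
    have h1 : ((((y - x) / 2).toNat : ℤ)) = (y - x) / 2 :=
      Int.toNat_of_nonneg (Int.ediv_nonneg (by linarith) (by norm_num))
    rw [h1]
    have h2 : (2:ℤ) ∣ x + y := ⟨((n:ℤ) + 1) * m, by rw [hm]; ring⟩
    omega


def t1 {N x y : ℤ} (hd : ¬ N ∣ y - x) (hs : ¬ N ∣ y + x)
    (h2x : ¬ N ∣ 2 * x) (h2y : ¬ N ∣ 2 * y) : Equiv.Perm ℤ :=
  Function.Involutive.toPerm _ (sw2_invol hd hs h2x h2y)

variable {N x y : ℤ} (hd : ¬ N ∣ y - x) (hs : ¬ N ∣ y + x)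
    (h2x : ¬ N ∣ 2 * x) (h2y : ¬ N ∣ 2 * y)

lemma t1_apply (z : ℤ) : t1 hd hs h2x h2y z = sw2 N x y z := rfl

lemma t1_sq : t1 hd hs h2x h2y * t1 hd hs h2x h2y = 1 := by
  ext z
  simp only [Equiv.Perm.mul_apply, t1_apply, Equiv.Perm.one_apply]
  exact sw2_invol hd hs h2x h2y z

lemma nd_neg {N a : ℤ} (h : ¬ N ∣ a) : ¬ N ∣ -a := fun h' => h (dvd_neg.mp h')

lemma t1_xy (k : ℤ) : t1 hd hs h2x h2y (x + k * N) = y + k * N := by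
  have hkN : N ∣ k * N := ⟨k, mul_comm k N⟩
  rw [t1_apply]; unfold sw2
  rw [if_pos (dvd_aux hkN (by ring))]; ring

lemma t1_yx (k : ℤ) : t1 hd hs h2x h2y (y + k * N) = x + k * N := by
  have hkN : N ∣ k * N := ⟨k, mul_comm k N⟩
  rw [t1_apply]; unfold sw2
  rw [if_neg (not_dvd_aux hkN hd (by ring)), if_pos (dvd_aux hkN (by ring))]; ring

lemma t1_mxy (k : ℤ) : t1 hd hs h2x h2y (-x + k * N) = -y + k * N := by
  have hkN : N ∣ k * N := ⟨k, mul_comm k N⟩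
  rw [t1_apply]; unfold sw2
  rw [if_neg (not_dvd_aux hkN (nd_neg h2x) (by ring)),
    if_neg (not_dvd_aux hkN (nd_neg hs) (by ring)),
    if_pos (dvd_aux hkN (by ring))]; ring

lemma t1_myx (k : ℤ) : t1 hd hs h2x h2y (-y + k * N) = -x + k * N := by
  have hkN : N ∣ k * N := ⟨k, mul_comm k N⟩
  have hd' : ¬ N ∣ x - y := fun h => hd (by have := dvd_neg.mpr h; simpa [neg_sub] using this)
  rw [t1_apply]; unfold sw2
  rw [if_neg (not_dvd_aux hkN (nd_neg hs) (by ring)),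
    if_neg (not_dvd_aux hkN (nd_neg h2y) (by ring)),
    if_neg (not_dvd_aux hkN hd' (by ring)),
    if_pos (dvd_aux hkN (by ring))]; ring

lemma t1_fix (z : ℤ) (c1 : ¬ N ∣ z - x) (c2 : ¬ N ∣ z - y) (c3 : ¬ N ∣ z + x)
    (c4 : ¬ N ∣ z + y) : t1 hd hs h2x h2y z = z := by
  rw [t1_apply]; unfold sw2
  rw [if_neg c1, if_neg c2, if_neg c3, if_neg c4]

lemma is_transp1 {n : ℕ} {x y : ℤ} (hxy : x < y)
    (hd : ¬ (2 * (n : ℤ) + 2) ∣ (y - x)) (hs : ¬ (2 * (n : ℤ) + 2) ∣ (y + x))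
    (h2x : ¬ (2 * (n : ℤ) + 2) ∣ 2 * x) (h2y : ¬ (2 * (n : ℤ) + 2) ∣ 2 * y) :
    IsAffCTransp n (t1 hd hs h2x h2y) ((y - x).toNat) := by
  left
  refine ⟨x, y, hxy, hd, hs, t1_xy hd hs h2x h2y, t1_yx hd hs h2x h2y,
    t1_mxy hd hs h2x h2y, t1_myx hd hs h2x h2y, ?_, ?_⟩
  · intro z hz
    refine t1_fix hd hs h2x h2y z (fun h => ?_) (fun h => ?_) (fun h => ?_) (fun h => ?_)
    · obtain ⟨k, hk⟩ := h; exact (hz k).1 (by linarith)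
    · obtain ⟨k, hk⟩ := h; exact (hz k).2.1 (by linarith)
    · obtain ⟨k, hk⟩ := h; exact (hz k).2.2.1 (by linarith)
    · obtain ⟨k, hk⟩ := h; exact (hz k).2.2.2 (by linarith)
  · exact Int.toNat_of_nonneg (by linarith)

variable {n : ℕ}

lemma not_dvd_small {a : ℤ} (h1 : -(2 * (n : ℤ) + 2) < a) (h2 : a < 2 * (n : ℤ) + 2)
    (h3 : a ≠ 0) : ¬ (2 * (n : ℤ) + 2) ∣ a :=
  fun h => h3 (bounded_eq_zero (by positivity) h h1 h2)

lemma not_dvd_shift {N a r k : ℤ} (h : ¬ N ∣ r) (e : a = r + k * N) : ¬ N ∣ a := by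
  intro hh
  refine h ?_
  have h2 : N ∣ k * N := ⟨k, mul_comm k N⟩
  have := dvd_sub hh h2
  rwa [show a - k * N = r by linear_combination e] at this

lemma factor_snoc {w T : Equiv.Perm ℤ} {c : ℕ} (hT : IsAffCTransp n T c)
    (hTT : T * T = 1)
    (h : ∃ L : List (Equiv.Perm ℤ × ℕ), (∀ p ∈ L, IsAffCTransp n p.1 p.2) ∧
      (L.map Prod.fst).prod = w * T) :
    ∃ L : List (Equiv.Perm ℤ × ℕ), (∀ p ∈ L, IsAffCTransp n p.1 p.2) ∧
      (L.map Prod.fst).prod = w := by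
  obtain ⟨L, h1, h2⟩ := h
  refine ⟨L ++ [(T, c)], ?_, ?_⟩
  · intro p hp
    rcases List.mem_append.mp hp with hp | hp
    · exact h1 p hp
    · simp only [List.mem_singleton] at hp
      rw [hp]
      exact hT
  · rw [List.map_append, List.prod_append, h2]
    simp only [List.map_cons, List.map_nil, List.prod_cons, List.prod_nil, mul_one]
    rw [mul_assoc, hTT, mul_one]

lemma exists_factorization {w : Equiv.Perm ℤ} (hw : IsAffCPerm n w) :
    ∃ L : List (Equiv.Perm ℤ × ℕ), (∀ p ∈ L, IsAffCTransp n p.1 p.2) ∧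
      (L.map Prod.fst).prod = w := by
  suffices h : ∀ k : ℕ, ∀ w : Equiv.Perm ℤ, IsAffCPerm n w →
      (∀ j : ℤ, 1 ≤ j → j ≤ (n : ℤ) - (k : ℤ) → w j = j) →
      ∃ L : List (Equiv.Perm ℤ × ℕ), (∀ p ∈ L, IsAffCTransp n p.1 p.2) ∧
        (L.map Prod.fst).prod = w by
    exact h n w hw fun j h1 h2 => absurd h2 (by omega)
  intro k
  induction k with
  | zero =>
      intro w hw hfix
      refine ⟨[], by simp, ?_⟩
      have hw1 : w = 1 := by
        refine Equiv.ext fun z => ?_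
        obtain ⟨e, j, m, he, hj0, hj1, hz⟩ := decomp n z
        have hwj : w j = j := by
          rcases eq_or_lt_of_le hj0 with h0 | h0
          · rw [← h0]; exact perm_zero hw
          · rcases eq_or_lt_of_le hj1 with h1 | h1
            · rw [h1]; exact perm_np1 hw
            · exact hfix j h0 (by omega)
        rw [hz, perm_apply hw he j m, hwj]
        simp
      rw [hw1]; simp
  | succ k ih =>
      intro w hw hfix
      have hNpos : (0:ℤ) < 2 * (n : ℤ) + 2 := by positivity
      by_cases hik : (n : ℤ) - (k : ℤ) < 1
      · exact ih w hw fun j h1 h2 => absurd h2 (by omega)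
      · push_neg at hik
        set i : ℤ := (n : ℤ) - (k : ℤ) with hidef
        have hi1 : 1 ≤ i := hik
        have hi2 : i ≤ (n : ℤ) := by omega
        have hfix' : ∀ j : ℤ, 1 ≤ j → j ≤ i - 1 → w j = j := fun j h1 h2 =>
          hfix j h1 (by push_cast; omega)
        by_cases hwi : w i = i
        · refine ih w hw fun j h1 h2 => ?_
          rcases eq_or_lt_of_le h2 with rfl | hlt
          · exact hwi
          · exact hfix' j h1 (by omega)
        · set b := w.symm i with hbdef
          have hwb : w b = i := w.apply_symm_apply i
          have hbi : b ≠ i := fun h => hwi (h ▸ hwb)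
          obtain ⟨e, j, m, he, hj0, hj1, hb⟩ := decomp n b
          have hclass : w j ≠ j := by
            intro hwj
            have hwbb : w b = b := by rw [hb, perm_apply hw he j m, hwj]
            have hbi2 : b = i := by rw [← hwb, hwbb]
            rcases he with rfl | rfl
            · have h0 : i - j = 0 := bounded_eq_zero hNpos
                ⟨m, by linear_combination hb - hbi2⟩ (by omega) (by omega)
              have hji : j = i := by omega
              rw [hji] at hwj
              exact hwi hwj
            · have h0 : i + j = 0 := bounded_eq_zero hNpos
                ⟨m, by linear_combination hb - hbi2⟩ (by omega) (by omega)
              omega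
          have hj1' : 1 ≤ j := by
            rcases eq_or_lt_of_le hj0 with h0 | h0
            · exact absurd (by rw [← h0]; exact perm_zero hw) hclass
            · exact h0
          have hjn : j ≤ (n : ℤ) := by
            by_contra hcon
            have hj : j = (n : ℤ) + 1 := by omega
            exact hclass (by rw [hj]; exact perm_np1 hw)
          have hji : i ≤ j := by
            by_contra hcon
            exact hclass (hfix' j hj1' (by omega))
          have hni : ¬ ((n : ℤ) + 1) ∣ i :=
            fun h => by
              have := bounded_eq_zero (show (0:ℤ) < (n:ℤ)+1 by positivity) h
                (by omega) (by omega)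
              omega
          have hik' : (n : ℤ) - ((k : ℕ) : ℤ) = i := rfl
          by_cases hA : (2 * (n : ℤ) + 2) ∣ b - i
          · -- b ≡ i (mod N): use two second-kind transpositions
            obtain ⟨m1, hm1⟩ := hA
            have hm1ne : m1 ≠ 0 := by
              rintro rfl
              simp only [mul_zero] at hm1
              exact hbi (by omega)
            have hd2 : ¬ (2 * (n : ℤ) + 2) ∣ (2 * (n : ℤ) + 2 - i) - i :=
              not_dvd_small (by omega) (by omega) (by omega)
            set T2 : Equiv.Perm ℤ := t2 (N := 2 * (n : ℤ) + 2) (x := i)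
              (y := 2 * (n : ℤ) + 2 - i) hd2 with hT2def
            have spec2 : IsAffCTransp n T2 ((2 * (n : ℤ) + 2 - i - i) / 2).toNat :=
              is_transp2 (by omega) ⟨1, by ring⟩ hd2 hni
            have hT2i : T2 i = 2 * (n : ℤ) + 2 - i := by
              have := t2_left (N := 2 * (n : ℤ) + 2) (x := i)
                (y := 2 * (n : ℤ) + 2 - i) hd2 0
              simpa using this
            have hT2fix : ∀ j' : ℤ, 1 ≤ j' → j' ≤ i - 1 → T2 j' = j' := by
              intro j' h1 h2
              refine t2_fix hd2 j' (not_dvd_small (by omega) (by omega) (by omega))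
                (not_dvd_small (by omega) (by omega) (by omega))
            rcases lt_or_gt_of_ne hm1ne with hm1lt | hm1gt
            · -- m1 ≤ -1 : pair (b, 2n+2-i)
              have hble : b - i ≤ -(2 * (n : ℤ) + 2) := by
                calc b - i = (2 * (n : ℤ) + 2) * m1 := hm1
                  _ ≤ (2 * (n : ℤ) + 2) * (-1) := by
                      apply mul_le_mul_of_nonneg_left (by omega) (by positivity)
                  _ = -(2 * (n : ℤ) + 2) := by ring
              have hd1 : ¬ (2 * (n : ℤ) + 2) ∣ (2 * (n : ℤ) + 2 - i) - b :=
                not_dvd_shift (not_dvd_small (n := n) (by omega) (by omega) (by omega))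
                  (show (2 * (n : ℤ) + 2 - i) - b
                      = (2 * (n:ℤ) + 2 - 2*i) + (-m1) * (2 * (n:ℤ) + 2) by
                    linear_combination -hm1)
              set T1 : Equiv.Perm ℤ := t2 (N := 2 * (n : ℤ) + 2) (x := b)
                (y := 2 * (n : ℤ) + 2 - i) hd1 with hT1def
              have spec1 : IsAffCTransp n T1 (((2 * (n : ℤ) + 2 - i) - b) / 2).toNat := by
                refine is_transp2 (by omega) ⟨m1 + 1, by linear_combination hm1⟩ hd1 ?_
                exact not_dvd_shift (N := (n:ℤ)+1) (r := i) (k := 2 * m1)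
                  hni (by linear_combination hm1)
              have hT1Ni : T1 (2 * (n : ℤ) + 2 - i) = b := by
                have := t2_right (N := 2 * (n : ℤ) + 2) (x := b)
                  (y := 2 * (n : ℤ) + 2 - i) hd1 0
                simpa using this
              have hT1fix : ∀ j' : ℤ, 1 ≤ j' → j' ≤ i - 1 → T1 j' = j' := by
                intro j' h1 h2
                refine t2_fix hd1 j' ?_ (not_dvd_small (by omega) (by omega) (by omega))
                exact not_dvd_shift (r := j' - i) (k := -m1)
                  (not_dvd_small (by omega) (by omega) (by omega))
                  (by linear_combination -hm1)
              have hw' : IsAffCPerm n (w * T1 * T2) :=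
                mul_isPerm (mul_isPerm hw (transp_isPerm spec1)) (transp_isPerm spec2)
              have hf'' : ∀ j' : ℤ, 1 ≤ j' → j' ≤ (n : ℤ) - ((k : ℕ) : ℤ) →
                  (w * T1 * T2) j' = j' := by
                intro j' h1 h2
                rw [hik'] at h2
                simp only [Equiv.Perm.mul_apply]
                rcases eq_or_lt_of_le h2 with rfl | hlt
                · rw [hT2i, hT1Ni, hwb]
                · rw [hT2fix j' h1 (by omega), hT1fix j' h1 (by omega),
                    hfix' j' h1 (by omega)]
              exact factor_snoc spec1 (t2_sq hd1)
                (factor_snoc spec2 (t2_sq hd2) (ih (w * T1 * T2) hw' hf''))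
            · -- m1 ≥ 1 : pair (2n+2-i, b)
              have hbge : 2 * (n : ℤ) + 2 ≤ b - i := by
                calc 2 * (n : ℤ) + 2 = (2 * (n : ℤ) + 2) * 1 := by ring
                  _ ≤ (2 * (n : ℤ) + 2) * m1 := by
                      apply mul_le_mul_of_nonneg_left (by omega) (by positivity)
                  _ = b - i := hm1.symm
              have hd1 : ¬ (2 * (n : ℤ) + 2) ∣ b - (2 * (n : ℤ) + 2 - i) :=
                not_dvd_shift (not_dvd_small (n := n) (by omega) (by omega) (by omega))
                  (show b - (2 * (n : ℤ) + 2 - i)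
                      = (2*i - (2 * (n:ℤ) + 2)) + m1 * (2 * (n:ℤ) + 2) by
                    linear_combination hm1)
              set T1 : Equiv.Perm ℤ := t2 (N := 2 * (n : ℤ) + 2)
                (x := 2 * (n : ℤ) + 2 - i) (y := b) hd1 with hT1def
              have spec1 : IsAffCTransp n T1 ((b - (2 * (n : ℤ) + 2 - i)) / 2).toNat := by
                refine is_transp2 (by omega) ⟨m1 + 1, by linear_combination hm1⟩ hd1 ?_
                exact not_dvd_shift (N := (n:ℤ)+1) (r := -i) (k := 2)
                  (fun h => hni (by
                    have := dvd_neg.mpr h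
                    simpa using this)) (by ring)
              have hT1Ni : T1 (2 * (n : ℤ) + 2 - i) = b := by
                have := t2_left (N := 2 * (n : ℤ) + 2)
                  (x := 2 * (n : ℤ) + 2 - i) (y := b) hd1 0
                simpa using this
              have hT1fix : ∀ j' : ℤ, 1 ≤ j' → j' ≤ i - 1 → T1 j' = j' := by
                intro j' h1 h2
                refine t2_fix hd1 j' (not_dvd_small (by omega) (by omega) (by omega)) ?_
                exact not_dvd_shift (r := j' - i) (k := -m1)
                  (not_dvd_small (by omega) (by omega) (by omega))
                  (by linear_combination -hm1)
              have hw' : IsAffCPerm n (w * T1 * T2) :=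
                mul_isPerm (mul_isPerm hw (transp_isPerm spec1)) (transp_isPerm spec2)
              have hf'' : ∀ j' : ℤ, 1 ≤ j' → j' ≤ (n : ℤ) - ((k : ℕ) : ℤ) →
                  (w * T1 * T2) j' = j' := by
                intro j' h1 h2
                rw [hik'] at h2
                simp only [Equiv.Perm.mul_apply]
                rcases eq_or_lt_of_le h2 with rfl | hlt
                · rw [hT2i, hT1Ni, hwb]
                · rw [hT2fix j' h1 (by omega), hT1fix j' h1 (by omega),
                    hfix' j' h1 (by omega)]
              exact factor_snoc spec1 (t2_sq hd1)
                (factor_snoc spec2 (t2_sq hd2) (ih (w * T1 * T2) hw' hf''))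
          · by_cases hB : (2 * (n : ℤ) + 2) ∣ b + i
            · -- b ≡ -i (mod N): one second-kind transposition swapping i and b
              obtain ⟨m1, hm1⟩ := hB
              have hd2i : ¬ (2 * (n : ℤ) + 2) ∣ 2 * i :=
                not_dvd_small (by omega) (by omega) (by omega)
              rcases lt_or_gt_of_ne hbi with hblt | hbgt
              · -- pair (b, i)
                have hd1 : ¬ (2 * (n : ℤ) + 2) ∣ i - b :=
                  not_dvd_shift (r := 2 * i) (k := -m1) hd2i (by linear_combination -hm1)
                set T : Equiv.Perm ℤ := t2 (N := 2 * (n : ℤ) + 2) (x := b) (y := i)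
                  hd1 with hTdef
                have spec : IsAffCTransp n T ((i - b) / 2).toNat := by
                  refine is_transp2 hblt ⟨m1, by linear_combination hm1⟩ hd1 ?_
                  exact not_dvd_shift (N := (n:ℤ)+1) (r := -i) (k := 2 * m1)
                    (fun h => hni (by
                      have := dvd_neg.mpr h
                      simpa using this)) (by linear_combination hm1)
                have hTi : T i = b := by
                  have := t2_right (N := 2 * (n : ℤ) + 2) (x := b) (y := i) hd1 0
                  simpa using this
                have hTfix : ∀ j' : ℤ, 1 ≤ j' → j' ≤ i - 1 → T j' = j' := by
                  intro j' h1 h2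
                  refine t2_fix hd1 j' ?_ (not_dvd_small (by omega) (by omega) (by omega))
                  exact not_dvd_shift (r := j' + i) (k := -m1)
                    (not_dvd_small (by omega) (by omega) (by omega))
                    (by linear_combination -hm1)
                have hw' : IsAffCPerm n (w * T) := mul_isPerm hw (transp_isPerm spec)
                have hf'' : ∀ j' : ℤ, 1 ≤ j' → j' ≤ (n : ℤ) - ((k : ℕ) : ℤ) →
                    (w * T) j' = j' := by
                  intro j' h1 h2
                  rw [hik'] at h2
                  simp only [Equiv.Perm.mul_apply]
                  rcases eq_or_lt_of_le h2 with rfl | hlt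
                  · rw [hTi, hwb]
                  · rw [hTfix j' h1 (by omega), hfix' j' h1 (by omega)]
                exact factor_snoc spec (t2_sq hd1) (ih (w * T) hw' hf'')
              · -- pair (i, b)
                have hd1 : ¬ (2 * (n : ℤ) + 2) ∣ b - i :=
                  not_dvd_shift (r := -(2 * i)) (k := m1) (fun h => hd2i (dvd_neg.mp h))
                    (by linear_combination hm1)
                set T : Equiv.Perm ℤ := t2 (N := 2 * (n : ℤ) + 2) (x := i) (y := b)
                  hd1 with hTdef
                have spec : IsAffCTransp n T ((b - i) / 2).toNat :=
                  is_transp2 hbgt ⟨m1, by linear_combination hm1⟩ hd1 hni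
                have hTi : T i = b := by
                  have := t2_left (N := 2 * (n : ℤ) + 2) (x := i) (y := b) hd1 0
                  simpa using this
                have hTfix : ∀ j' : ℤ, 1 ≤ j' → j' ≤ i - 1 → T j' = j' := by
                  intro j' h1 h2
                  refine t2_fix hd1 j' (not_dvd_small (by omega) (by omega) (by omega)) ?_
                  exact not_dvd_shift (r := j' + i) (k := -m1)
                    (not_dvd_small (by omega) (by omega) (by omega))
                    (by linear_combination -hm1)
                have hw' : IsAffCPerm n (w * T) := mul_isPerm hw (transp_isPerm spec)
                have hf'' : ∀ j' : ℤ, 1 ≤ j' → j' ≤ (n : ℤ) - ((k : ℕ) : ℤ) →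
                    (w * T) j' = j' := by
                  intro j' h1 h2
                  rw [hik'] at h2
                  simp only [Equiv.Perm.mul_apply]
                  rcases eq_or_lt_of_le h2 with rfl | hlt
                  · rw [hTi, hwb]
                  · rw [hTfix j' h1 (by omega), hfix' j' h1 (by omega)]
                exact factor_snoc spec (t2_sq hd1) (ih (w * T) hw' hf'')
            · -- generic case: first-kind transposition swapping i and b (and mirrors)
              have h2b : ¬ (2 * (n : ℤ) + 2) ∣ 2 * b := by
                rcases he with rfl | rfl
                · exact not_dvd_shift (r := 2 * j) (k := 2 * m)
                    (not_dvd_small (by omega) (by omega) (by omega))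
                    (by linear_combination 2 * hb)
                · exact not_dvd_shift (r := -(2 * j)) (k := 2 * m)
                    (not_dvd_small (by omega) (by omega) (by omega))
                    (by linear_combination 2 * hb)
              have h2i : ¬ (2 * (n : ℤ) + 2) ∣ 2 * i :=
                not_dvd_small (by omega) (by omega) (by omega)
              have hfixgen : ∀ j' : ℤ, 1 ≤ j' → j' ≤ i - 1 →
                  (¬ (2 * (n : ℤ) + 2) ∣ j' - b) ∧ (¬ (2 * (n : ℤ) + 2) ∣ j' + b) := by
                intro j' h1 h2
                rcases he with rfl | rfl
                · exact ⟨not_dvd_shift (r := j' - j) (k := -m)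
                    (not_dvd_small (by omega) (by omega) (by omega))
                    (by linear_combination -hb),
                   not_dvd_shift (r := j' + j) (k := m)
                    (not_dvd_small (by omega) (by omega) (by omega))
                    (by linear_combination hb)⟩
                · exact ⟨not_dvd_shift (r := j' + j) (k := -m)
                    (not_dvd_small (by omega) (by omega) (by omega))
                    (by linear_combination -hb),
                   not_dvd_shift (r := j' - j) (k := m)
                    (not_dvd_small (by omega) (by omega) (by omega))
                    (by linear_combination hb)⟩
              rcases lt_or_gt_of_ne hbi with hblt | hbgt
              · -- pair (b, i)
                have hd : ¬ (2 * (n : ℤ) + 2) ∣ i - b :=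
                  fun h => hA (by
                    have := dvd_neg.mpr h
                    simpa [neg_sub] using this)
                have hs : ¬ (2 * (n : ℤ) + 2) ∣ i + b :=
                  fun h => hB (by
                    have e2 : b + i = i + b := by ring
                    rwa [e2])
                set T : Equiv.Perm ℤ := t1 (N := 2 * (n : ℤ) + 2) (x := b) (y := i)
                  hd hs h2b h2i with hTdef
                have spec : IsAffCTransp n T ((i - b).toNat) := is_transp1 hblt hd hs h2b h2i
                have hTi : T i = b := by
                  have := t1_yx (N := 2 * (n : ℤ) + 2) (x := b) (y := i) hd hs h2b h2i 0
                  simpa using this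
                have hTfix : ∀ j' : ℤ, 1 ≤ j' → j' ≤ i - 1 → T j' = j' := by
                  intro j' h1 h2
                  obtain ⟨e1, e2⟩ := hfixgen j' h1 h2
                  refine t1_fix hd hs h2b h2i j' e1
                    (not_dvd_small (by omega) (by omega) (by omega)) e2
                    (not_dvd_small (by omega) (by omega) (by omega))
                have hw' : IsAffCPerm n (w * T) := mul_isPerm hw (transp_isPerm spec)
                have hf'' : ∀ j' : ℤ, 1 ≤ j' → j' ≤ (n : ℤ) - ((k : ℕ) : ℤ) →
                    (w * T) j' = j' := by
                  intro j' h1 h2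
                  rw [hik'] at h2
                  simp only [Equiv.Perm.mul_apply]
                  rcases eq_or_lt_of_le h2 with rfl | hlt
                  · rw [hTi, hwb]
                  · rw [hTfix j' h1 (by omega), hfix' j' h1 (by omega)]
                exact factor_snoc spec (t1_sq hd hs h2b h2i) (ih (w * T) hw' hf'')
              · -- pair (i, b)
                have hd : ¬ (2 * (n : ℤ) + 2) ∣ b - i := hA
                have hs : ¬ (2 * (n : ℤ) + 2) ∣ b + i := hB
                set T : Equiv.Perm ℤ := t1 (N := 2 * (n : ℤ) + 2) (x := i) (y := b)
                  hd hs h2i h2b with hTdef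
                have spec : IsAffCTransp n T ((b - i).toNat) := is_transp1 hbgt hd hs h2i h2b
                have hTi : T i = b := by
                  have := t1_xy (N := 2 * (n : ℤ) + 2) (x := i) (y := b) hd hs h2i h2b 0
                  simpa using this
                have hTfix : ∀ j' : ℤ, 1 ≤ j' → j' ≤ i - 1 → T j' = j' := by
                  intro j' h1 h2
                  obtain ⟨e1, e2⟩ := hfixgen j' h1 h2
                  refine t1_fix hd hs h2i h2b j'
                    (not_dvd_small (by omega) (by omega) (by omega)) e1
                    (not_dvd_small (by omega) (by omega) (by omega)) e2
                have hw' : IsAffCPerm n (w * T) := mul_isPerm hw (transp_isPerm spec)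
                have hf'' : ∀ j' : ℤ, 1 ≤ j' → j' ≤ (n : ℤ) - ((k : ℕ) : ℤ) →
                    (w * T) j' = j' := by
                  intro j' h1 h2
                  rw [hik'] at h2
                  simp only [Equiv.Perm.mul_apply]
                  rcases eq_or_lt_of_le h2 with rfl | hlt
                  · rw [hTi, hwb]
                  · rw [hTfix j' h1 (by omega), hfix' j' h1 (by omega)]
                exact factor_snoc spec (t1_sq hd hs h2i h2b) (ih (w * T) hw' hf'')

end AffC

namespace AffC

variable {n : ℕ}

lemma tvd_one : tvdAffC n 1 = 0 := by simp [tvdAffC]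

lemma tvd_mul_le {t v : Equiv.Perm ℤ} {c : ℕ} (hv : IsAffCPerm n v)
    (ht : IsAffCTransp n t c) : tvdAffC n (t * v) ≤ 2 * c + tvdAffC n v := by
  unfold tvdAffC
  calc ∑ i ∈ Finset.Icc (1 : ℤ) (n : ℤ), ((t * v) i - i).natAbs
      ≤ ∑ i ∈ Finset.Icc (1 : ℤ) (n : ℤ), ((t (v i) - v i).natAbs + (v i - i).natAbs) := by
        refine Finset.sum_le_sum fun i _ => ?_
        rw [Equiv.Perm.mul_apply]
        have e : t (v i) - i = (t (v i) - v i) + (v i - i) := by ring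
        rw [e]
        exact Int.natAbs_add_le _ _
    _ = (∑ i ∈ Finset.Icc (1 : ℤ) (n : ℤ), (t (v i) - v i).natAbs)
        + ∑ i ∈ Finset.Icc (1 : ℤ) (n : ℤ), (v i - i).natAbs := Finset.sum_add_distrib
    _ ≤ 2 * c + ∑ i ∈ Finset.Icc (1 : ℤ) (n : ℤ), (v i - i).natAbs :=
        Nat.add_le_add_right (key_sum hv ht) _

lemma prod_facts : ∀ L : List (Equiv.Perm ℤ × ℕ), (∀ p ∈ L, IsAffCTransp n p.1 p.2) →
    IsAffCPerm n (L.map Prod.fst).prod ∧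
      tvdAffC n (L.map Prod.fst).prod ≤ 2 * (L.map Prod.snd).sum := by
  intro L
  induction L with
  | nil => exact fun _ => ⟨one_isPerm, by simp [tvd_one]⟩
  | cons p L ih =>
      intro h
      have hp := h p List.mem_cons_self
      have ihh := ih fun q hq => h q (List.mem_cons_of_mem p hq)
      simp only [List.map_cons, List.prod_cons, List.sum_cons]
      refine ⟨mul_isPerm (transp_isPerm hp) ihh.1, ?_⟩
      calc tvdAffC n (p.1 * (L.map Prod.fst).prod)
          ≤ 2 * p.2 + tvdAffC n (L.map Prod.fst).prod := tvd_mul_le ihh.1 hp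
        _ ≤ 2 * p.2 + 2 * (L.map Prod.snd).sum := Nat.add_le_add_left ihh.2 _
        _ = 2 * (p.2 + (L.map Prod.snd).sum) := by ring

end AffC

/-- For every affine signed permutation `w ∈ S̃^C_n`, the cost of `w` is at least
half of its total displacement: `$(w) ≥ tvd(w)/2`. -/
theorem cost_ge_half_tvd_affineC (n : ℕ) (w : Equiv.Perm ℤ) (hw : IsAffCPerm n w) :
    tvdAffC n w ≤ 2 * costAffC n w := by
  obtain ⟨L, hL1, hL2⟩ := AffC.exists_factorization hw
  have hne : {c : ℕ | ∃ L : List (Equiv.Perm ℤ × ℕ),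
      (∀ p ∈ L, IsAffCTransp n p.1 p.2) ∧
      (L.map Prod.fst).prod = w ∧ c = (L.map Prod.snd).sum}.Nonempty :=
    ⟨(L.map Prod.snd).sum, L, hL1, hL2, rfl⟩
  have hmem := Nat.sInf_mem hne
  obtain ⟨L0, hL01, hL02, hL03⟩ := hmem
  calc tvdAffC n w = tvdAffC n (L0.map Prod.fst).prod := by rw [hL02]
    _ ≤ 2 * (L0.map Prod.snd).sum := (AffC.prod_facts L0 hL01).2
    _ = 2 * costAffC n w := by rw [costAffC, ← hL03]
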